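/- The semistrong chromatic index of the cycle C_n satisfies χ'_ss(C_4) = χ'_ss(C_7) = 4, and χ'_ss(C_n) = 3 for every n ≥ 3 with n ∉ {4,7}. -/

import Mathlib

namespace SSE

open SimpleGraph

variable {V : Type*} {W : Type*}

/-- The set of vertices covered by a set of edges. -/
def cov (M : Set (Sym2 V)) : Set V := {v | ∃ e ∈ M, v ∈ e}

/-- `M` is a matching of `G`: a set of pairwise disjoint edges of `G`. -/
def IsMatchingSet (G : SimpleGraph V) (M : Set (Sym2 V)) : Prop :=
  M ⊆ G.edgeSet ∧ ∀ e ∈ M, ∀ f ∈ M, e ≠ f → ∀ v : V, v ∈ e → v ∉ f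

/-- `v` is a pendant vertex (degree 1) of the subgraph `G_M` of `G` induced by
the vertices covered by `M`. -/
def PendantIn (G : SimpleGraph V) (M : Set (Sym2 V)) (v : V) : Prop :=
  v ∈ cov M ∧ ∃! u, u ∈ cov M ∧ G.Adj v u

/-- `M` is an induced (strong) matching of `G`: every vertex of `G_M` is pendant in `G_M`. -/
def IsInducedMatching (G : SimpleGraph V) (M : Set (Sym2 V)) : Prop :=
  IsMatchingSet G M ∧ ∀ v ∈ cov M, PendantIn G M v

/-- `M` is a semistrong matching of `G`: every edge of `M` is a pendant edge of `G_M`. -/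
def IsSemistrongMatching (G : SimpleGraph V) (M : Set (Sym2 V)) : Prop :=
  IsMatchingSet G M ∧ ∀ e ∈ M, ∃ v, v ∈ e ∧ PendantIn G M v

/-- `N` is a perfect matching of the subgraph of `G` induced by `S`. -/
def IsPerfectMatchingOn (G : SimpleGraph V) (S : Set V) (N : Set (Sym2 V)) : Prop :=
  IsMatchingSet G N ∧ (∀ e ∈ N, ∀ v : V, v ∈ e → v ∈ S) ∧ cov N = S

/-- `M` is a uniquely restricted matching of `G`: it is the unique perfect matching
of the subgraph induced by the vertices it covers. -/
def IsUniquelyRestrictedMatching (G : SimpleGraph V) (M : Set (Sym2 V)) : Prop :=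
  IsMatchingSet G M ∧ ∀ N : Set (Sym2 V), IsPerfectMatchingOn G (cov M) N → N = M

/-- An edge coloring of `G` with colors `< k` each of whose color classes satisfies `P`. -/
def IsPColoring (G : SimpleGraph V) (P : SimpleGraph V → Set (Sym2 V) → Prop)
    (c : Sym2 V → ℕ) (k : ℕ) : Prop :=
  (∀ e ∈ G.edgeSet, c e < k) ∧ ∀ i : ℕ, P G {e | e ∈ G.edgeSet ∧ c e = i}

/-- The least number of colors in an edge coloring of `G` whose color classes satisfy `P`. -/
noncomputable def pIndex (G : SimpleGraph V)
    (P : SimpleGraph V → Set (Sym2 V) → Prop) : ℕ :=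
  sInf {k | ∃ c, IsPColoring G P c k}

/-- The chromatic index. -/
noncomputable def chromIndex (G : SimpleGraph V) : ℕ := pIndex G IsMatchingSet

/-- The uniquely restricted chromatic index. -/
noncomputable def urIndex (G : SimpleGraph V) : ℕ := pIndex G IsUniquelyRestrictedMatching

/-- The semistrong chromatic index. -/
noncomputable def ssIndex (G : SimpleGraph V) : ℕ := pIndex G IsSemistrongMatching

/-- The strong chromatic index. -/
noncomputable def strongIndex (G : SimpleGraph V) : ℕ := pIndex G IsInducedMatching

/-- The degree of a vertex. -/
noncomputable def natDeg (G : SimpleGraph V) (v : V) : ℕ := (G.neighborSet v).ncard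

/-- The maximum average degree of `G` is (strictly) less than `q`:
every nonempty (induced) subgraph has average degree `< q`. -/
def MadLT (G : SimpleGraph V) (q : ℚ) : Prop :=
  ∀ s : Set V, s.Finite → s.Nonempty →
    (2 * ({e ∈ G.edgeSet | ∀ v ∈ e, v ∈ s}.ncard : ℚ)) < q * s.ncard

/-- `K` is a minor of `G` (branch-set formulation). -/
def HasMinor (G : SimpleGraph V) (K : SimpleGraph W) : Prop :=
  ∃ B : W → Set V, (∀ w, (B w).Nonempty) ∧
    (∀ w, (G.induce (B w)).Connected) ∧
    (Pairwise fun w w' => Disjoint (B w) (B w')) ∧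
    (∀ w w', K.Adj w w' → ∃ u ∈ B w, ∃ v ∈ B w', G.Adj u v)

/-- `G` is planar (by Wagner's theorem: no `K₅` minor and no `K₃,₃` minor). -/
def IsPlanar (G : SimpleGraph V) : Prop :=
  ¬ HasMinor G (completeGraph (Fin 5)) ∧
  ¬ HasMinor G (completeBipartiteGraph (Fin 3) (Fin 3))

/-- The join `C_Δ ∨ I_2` of a cycle on `Δ` vertices with an independent set of 2 vertices. -/
def joinCI (n : ℕ) : SimpleGraph (Fin n ⊕ Fin 2) :=
  SimpleGraph.fromRel (fun x y =>
    match x, y with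
    | Sum.inl a, Sum.inl b => (SimpleGraph.cycleGraph n).Adj a b
    | Sum.inl _, Sum.inr _ => True
    | _, _ => False)

/-- `G` contains an `M`-alternating cycle: a cycle whose edges alternate between
edges in `M` and edges not in `M` (cyclically). -/
def HasAlternatingCycle (G : SimpleGraph V) (M : Set (Sym2 V)) : Prop :=
  ∃ (v : V) (c : G.Walk v v), c.IsCycle ∧
    List.Chain' (fun e f => ¬(e ∈ M ↔ f ∈ M)) c.edges ∧
    ∀ e ∈ c.edges.head?, ∀ f ∈ c.edges.getLast?, ¬(e ∈ M ↔ f ∈ M)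

/-- Edges `e` and `f` lie together on a cycle of length 4 in `G`. -/
def OnCommonC4 (G : SimpleGraph V) (e f : Sym2 V) : Prop :=
  ∃ (v : V) (c : G.Walk v v), c.IsCycle ∧ c.length = 4 ∧ e ∈ c.edges ∧ f ∈ c.edges



/-! ### Auxiliary development for `ssIndex_cycles` -/

section CycleAux

open Fin.CommRing

private lemma fin_one_ne {m : ℕ} (a : Fin (m+3)) : a + 1 ≠ a := by
  intro h
  have h2 : (1 : Fin (m+3)) = 0 := add_left_cancel (a := a) (by simpa using h)
  have := congrArg Fin.val h2
  simp [Fin.val_one] at this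

private lemma fin_two_ne {m : ℕ} (a : Fin (m+3)) : a + 2 ≠ a := by
  intro h
  have h2 : (2 : Fin (m+3)) = 0 := add_left_cancel (a := a) (by simpa using h)
  have := congrArg Fin.val h2
  simp [Fin.val_two, Nat.mod_eq_of_lt (show 2 < m+3 by omega)] at this

private lemma cg_adj {m : ℕ} (a : Fin (m+3)) : (cycleGraph (m+3)).Adj a (a+1) := by
  rw [cycleGraph_adj (n := m+1)]; right; ring_nf

private lemma cg_adj_iff {m : ℕ} {a b : Fin (m+3)} :
    (cycleGraph (m+3)).Adj a b ↔ b = a + 1 ∨ a = b + 1 := by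
  constructor
  · intro h
    rcases (cycleGraph_adj (n := m+1)).mp h with h | h
    · right; rw [sub_eq_iff_eq_add] at h; rw [h]; ring_nf
    · left; rw [sub_eq_iff_eq_add] at h; rw [h]; ring_nf
  · rintro (rfl | rfl)
    · exact cg_adj a
    · exact (cg_adj b).symm

private lemma edge_rep {m : ℕ} {e : Sym2 (Fin (m+3))} (he : e ∈ (cycleGraph (m+3)).edgeSet) :
    ∃ a, e = s(a, a+1) := by
  induction e using Sym2.ind with
  | _ u v =>
    rw [SimpleGraph.mem_edgeSet] at he
    rcases cg_adj_iff.mp he with h | h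
    · exact ⟨u, by rw [h]⟩
    · exact ⟨v, by rw [h, Sym2.eq_swap]⟩

private lemma edge_inj {m : ℕ} {a b : Fin (m+3)} (h : s(a, a+1) = s(b, b+1)) : a = b := by
  rw [Sym2.eq_iff] at h
  rcases h with ⟨h1, _⟩ | ⟨h1, h2⟩
  · exact h1
  · exfalso
    apply fin_two_ne b
    calc b + 2 = b + 1 + 1 := by ring
    _ = a + 1 := by rw [h1]
    _ = b := h2

/-- Combinatorial core: a semistrong coloring of `C_{m+3}` is the same as a cyclic sequence
with no two adjacent equal entries and no three entries at mutual distance 2 all equal. -/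
private def GoodCol (m k : ℕ) (col : Fin (m+3) → ℕ) : Prop :=
  (∀ a, col a < k) ∧ (∀ a, col a ≠ col (a+1)) ∧
  (∀ a, ¬(col a = col (a+2) ∧ col (a+2) = col (a+4)))

private lemma key (m k : ℕ) :
    (∃ c, IsPColoring (cycleGraph (m+3)) IsSemistrongMatching c k) ↔
      (∃ col, GoodCol m k col) := by
  constructor
  · rintro ⟨c, hbd, hcl⟩
    refine ⟨fun a => c s(a, a+1), fun a => hbd _ ((cycleGraph (m+3)).mem_edgeSet.mpr (cg_adj a)), ?_, ?_⟩
    · intro a hEq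
      have hmatch := (hcl (c s(a, a+1))).1.2
      refine hmatch s(a, a+1) ⟨(cycleGraph (m+3)).mem_edgeSet.mpr (cg_adj a), rfl⟩
        s(a+1, a+1+1) ⟨(cycleGraph (m+3)).mem_edgeSet.mpr (cg_adj (a+1)), hEq.symm⟩
        (fun h => fin_one_ne a (edge_inj h).symm) (a+1) ?_ ?_
      · exact Sym2.mem_mk_right a (a+1)
      · exact Sym2.mem_mk_left (a+1) (a+1+1)
    · rintro a ⟨h1, h2⟩
      set i := c s(a, a+1) with hi
      have e1 : a + 1 + 1 = a + 2 := by ring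
      have e2 : a + 2 + 1 = a + 3 := by ring
      have hm1 : s(a, a+1) ∈ {e | e ∈ (cycleGraph (m+3)).edgeSet ∧ c e = i} :=
        ⟨(cycleGraph (m+3)).mem_edgeSet.mpr (cg_adj a), rfl⟩
      have hm2 : s(a+2, a+2+1) ∈ {e | e ∈ (cycleGraph (m+3)).edgeSet ∧ c e = i} :=
        ⟨(cycleGraph (m+3)).mem_edgeSet.mpr (cg_adj (a+2)), h1.symm⟩
      have hm3 : s(a+4, a+4+1) ∈ {e | e ∈ (cycleGraph (m+3)).edgeSet ∧ c e = i} :=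
        ⟨(cycleGraph (m+3)).mem_edgeSet.mpr (cg_adj (a+4)), (h1.trans h2).symm⟩
      obtain ⟨v, hv, _, ⟨u, _, huniq⟩⟩ := (hcl i).2 _ hm2
      rcases Sym2.mem_iff.mp hv with rfl | rfl
      · have q1 : (a+1) ∈ cov {e | e ∈ (cycleGraph (m+3)).edgeSet ∧ c e = i} ∧
            (cycleGraph (m+3)).Adj (a+2) (a+1) :=
          ⟨⟨s(a, a+1), hm1, Sym2.mem_mk_right a (a+1)⟩, by rw [← e1]; exact (cg_adj (a+1)).symm⟩
        have q2 : (a+2+1) ∈ cov {e | e ∈ (cycleGraph (m+3)).edgeSet ∧ c e = i} ∧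
            (cycleGraph (m+3)).Adj (a+2) (a+2+1) :=
          ⟨⟨s(a+2, a+2+1), hm2, Sym2.mem_mk_right _ _⟩, cg_adj (a+2)⟩
        have : a + 1 = a + 2 + 1 := (huniq _ q1).trans (huniq _ q2).symm
        rw [e2] at this
        exact fin_two_ne (a+1) (by rw [show a+1+2 = a+3 by ring]; exact this.symm)
      · have q1 : (a+2) ∈ cov {e | e ∈ (cycleGraph (m+3)).edgeSet ∧ c e = i} ∧
            (cycleGraph (m+3)).Adj (a+2+1) (a+2) :=
          ⟨⟨s(a+2, a+2+1), hm2, Sym2.mem_mk_left _ _⟩, (cg_adj (a+2)).symm⟩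
        have q2 : (a+4) ∈ cov {e | e ∈ (cycleGraph (m+3)).edgeSet ∧ c e = i} ∧
            (cycleGraph (m+3)).Adj (a+2+1) (a+4) :=
          ⟨⟨s(a+4, a+4+1), hm3, Sym2.mem_mk_left _ _⟩, by
            rw [e2, show a+4 = a+3+1 by ring]; exact cg_adj (a+3)⟩
        have : a + 2 = a + 4 := (huniq _ q1).trans (huniq _ q2).symm
        exact fin_two_ne (a+2) (by rw [show a+2+2 = a+4 by ring]; exact this.symm)
  · rintro ⟨col, hbd, hA, hB⟩
    classical
    refine ⟨fun e => if h : ∃ a, e = s(a, a+1) then col h.choose else 0, ?_, ?_⟩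
    · intro e he
      obtain ⟨a, rfl⟩ := edge_rep he
      have hex : ∃ b : Fin (m+3), s(a, a+1) = s(b, b+1) := ⟨a, rfl⟩
      beta_reduce
      rw [dif_pos hex, ← edge_inj hex.choose_spec]
      exact hbd a
    · intro i
      set c : Sym2 (Fin (m+3)) → ℕ := fun e => if h : ∃ a, e = s(a, a+1) then col h.choose else 0 with hcdef
      have hcs : ∀ a : Fin (m+3), c s(a, a+1) = col a := by
        intro a
        have hex : ∃ b : Fin (m+3), s(a, a+1) = s(b, b+1) := ⟨a, rfl⟩
        rw [hcdef]
        beta_reduce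
        rw [dif_pos hex, ← edge_inj hex.choose_spec]
      set M := {e | e ∈ (cycleGraph (m+3)).edgeSet ∧ c e = i} with hM
      have hmem : ∀ e, e ∈ M ↔ ∃ a, e = s(a, a+1) ∧ col a = i := by
        intro e
        constructor
        · rintro ⟨he, hce⟩
          obtain ⟨a, rfl⟩ := edge_rep he
          exact ⟨a, rfl, by rwa [hcs] at hce⟩
        · rintro ⟨a, rfl, h⟩
          exact ⟨(cycleGraph (m+3)).mem_edgeSet.mpr (cg_adj a), by rw [hcs]; exact h⟩
      have hcov : ∀ v : Fin (m+3), v ∈ cov M ↔ ∃ a, col a = i ∧ (v = a ∨ v = a + 1) := by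
        intro v
        constructor
        · rintro ⟨e, heM, hve⟩
          obtain ⟨a, rfl, ha⟩ := (hmem e).mp heM
          exact ⟨a, ha, Sym2.mem_iff.mp hve⟩
        · rintro ⟨a, ha, hv⟩
          exact ⟨s(a, a+1), (hmem _).mpr ⟨a, rfl, ha⟩, Sym2.mem_iff.mpr hv⟩
      constructor
      · refine ⟨fun e he => he.1, ?_⟩
        intro e heM f hfM hne v hve hvf
        obtain ⟨a, rfl, ha⟩ := (hmem e).mp heM
        obtain ⟨b, rfl, hb⟩ := (hmem f).mp hfM
        have hab : a ≠ b := fun h => hne (by rw [h])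
        rcases Sym2.mem_iff.mp hve with rfl | rfl
        · rcases Sym2.mem_iff.mp hvf with h | h
          · exact hab h
          · exact hA b (by rw [hb, ← h, ha])
        · rcases Sym2.mem_iff.mp hvf with h | h
          · exact hA a (by rw [ha, h, hb])
          · exact hab (add_right_cancel h)
      · intro e heM
        obtain ⟨a, rfl, ha⟩ := (hmem e).mp heM
        have hB' := hB (a - 2)
        rw [show a - 2 + 2 = a by ring, show a - 2 + 4 = a + 2 by ring] at hB'
        by_cases hcase : col (a+2) = i
        · have hnot : col (a - 2) ≠ i := fun hcon => hB' ⟨hcon.trans ha.symm, ha.trans hcase.symm⟩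
          refine ⟨a, Sym2.mem_mk_left _ _, (hcov a).mpr ⟨a, ha, Or.inl rfl⟩,
            a+1, ⟨(hcov _).mpr ⟨a, ha, Or.inr rfl⟩, cg_adj a⟩, ?_⟩
          rintro u ⟨hucov, huadj⟩
          rcases cg_adj_iff.mp huadj with h | h
          · exact h
          · exfalso
            obtain ⟨b, hb, hub⟩ := (hcov u).mp hucov
            rcases hub with rfl | h2
            · exact hA u (by rw [hb, ← h, ha])
            · apply hnot
              rw [show a - 2 = b from by rw [h, h2]; ring]
              exact hb
        · refine ⟨a+1, Sym2.mem_mk_right _ _, (hcov _).mpr ⟨a, ha, Or.inr rfl⟩,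
            a, ⟨(hcov a).mpr ⟨a, ha, Or.inl rfl⟩, (cg_adj a).symm⟩, ?_⟩
          rintro u ⟨hucov, huadj⟩
          rcases cg_adj_iff.mp huadj with h | h
          · exfalso
            obtain ⟨b, hb, hub⟩ := (hcov u).mp hucov
            rcases hub with h2 | h2
            · apply hcase
              rw [show a + 2 = b from by rw [← h2, h]; ring]
              exact hb
            · have hba : b = a + 1 := add_right_cancel (h2.symm.trans h)
              exact hA a (by rw [ha, ← hba, hb])
          · exact (add_right_cancel h).symm

private lemma ssIndex_eq (m : ℕ) :
    ssIndex (cycleGraph (m+3)) = sInf {k | ∃ col, GoodCol m k col} := by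
  unfold ssIndex pIndex
  congr 1
  ext k
  simp only [Set.mem_setOf_eq]
  exact key m k

private lemma lower3 {m k : ℕ} (h : ∃ col, GoodCol m k col) : 3 ≤ k := by
  obtain ⟨col, hbd, hA, hB⟩ := h
  by_contra hk
  push_neg at hk
  have step : ∀ a : Fin (m+3), col a = col (a + 2) := by
    intro a
    have h1 := hA a
    have h2 := hA (a + 1)
    rw [show a + 1 + 1 = a + 2 by ring] at h2
    have b1 := hbd a
    have b2 := hbd (a+1)
    have b3 := hbd (a+2)
    omega
  refine hB 0 ⟨step 0, ?_⟩
  have := step (0 + 2)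
  rwa [show ((0:Fin (m+3)) + 2) + 2 = 0 + 4 by ring] at this

private lemma four {x0 x1 x2 x3 : ℕ} (h0 : x0 < 3) (h1 : x1 < 3) (h2 : x2 < 3) (h3 : x3 < 3)
    (a0 : x0 ≠ x1) (a1 : x1 ≠ x2) (a2 : x2 ≠ x3) (a3 : x3 ≠ x0)
    (c0 : x0 ≠ x2) (c1 : x1 ≠ x3) : False := by omega

private def allB (p : ℕ → Bool) : ℕ → Bool
  | 0 => true
  | n+1 => p n && allB p n

private lemma allB_spec {p : ℕ → Bool} : ∀ {n}, allB p n = true → ∀ m, m < n → p m = true := by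
  intro n
  induction n with
  | zero => intro _ m hm; omega
  | succ n ih =>
    intro h m hm
    rw [allB, Bool.and_eq_true] at h
    rcases Nat.lt_succ_iff_lt_or_eq.mp hm with h2 | rfl
    · exact ih h.2 m h2
    · exact h.1

private def bad7 (x0 x1 x2 x3 x4 x5 x6 : ℕ) : Bool :=
  x0 == x1 || x1 == x2 || x2 == x3 || x3 == x4 || x4 == x5 || x5 == x6 || x6 == x0 ||
  (x0 == x2 && x2 == x4) || (x1 == x3 && x3 == x5) || (x2 == x4 && x4 == x6) ||
  (x3 == x5 && x5 == x0) || (x4 == x6 && x6 == x1) || (x5 == x0 && x0 == x2) ||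
  (x6 == x1 && x1 == x3)

set_option maxHeartbeats 8000000 in
private lemma chk_true : allB (fun x0 => allB (fun x1 => allB (fun x2 => allB (fun x3 =>
    allB (fun x4 => allB (fun x5 => allB (fun x6 => bad7 x0 x1 x2 x3 x4 x5 x6) 3) 3) 3) 3) 3) 3) 3 = true := by rfl

private lemma seven {x0 x1 x2 x3 x4 x5 x6 : ℕ} (h0 : x0 < 3) (h1 : x1 < 3) (h2 : x2 < 3)
    (h3 : x3 < 3) (h4 : x4 < 3) (h5 : x5 < 3) (h6 : x6 < 3)
    (a0 : x0 ≠ x1) (a1 : x1 ≠ x2) (a2 : x2 ≠ x3) (a3 : x3 ≠ x4) (a4 : x4 ≠ x5)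
    (a5 : x5 ≠ x6) (a6 : x6 ≠ x0)
    (c0 : ¬(x0 = x2 ∧ x2 = x4)) (c1 : ¬(x1 = x3 ∧ x3 = x5)) (c2 : ¬(x2 = x4 ∧ x4 = x6))
    (c3 : ¬(x3 = x5 ∧ x5 = x0)) (c4 : ¬(x4 = x6 ∧ x6 = x1)) (c5 : ¬(x5 = x0 ∧ x0 = x2))
    (c6 : ¬(x6 = x1 ∧ x1 = x3)) : False := by
  have h := chk_true
  replace h := allB_spec h x0 h0
  replace h := allB_spec h x1 h1
  replace h := allB_spec h x2 h2
  replace h := allB_spec h x3 h3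
  replace h := allB_spec h x4 h4
  replace h := allB_spec h x5 h5
  replace h := allB_spec h x6 h6
  simp only [bad7, Bool.or_eq_true, Bool.and_eq_true, beq_iff_eq] at h
  rcases h with ((((((((((((h|h)|h)|h)|h)|h)|h)|h)|h)|h)|h)|h)|h)|h
  exacts [a0 h, a1 h, a2 h, a3 h, a4 h, a5 h, a6 h, c0 h, c1 h, c2 h, c3 h, c4 h, c5 h, c6 h]

private lemma lb4 {k : ℕ} (h : ∃ col, GoodCol 1 k col) : 4 ≤ k := by
  obtain ⟨col, hbd, hA, hB⟩ := h
  by_contra hk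
  push_neg at hk
  have hb : ∀ a, col a < 3 := fun a => by have := hbd a; omega
  have a0 := hA 0
  have a1 := hA 1
  have a2 := hA 2
  have a3 := hA 3
  rw [show (0:Fin (1+3)) + 1 = 1 by decide] at a0
  rw [show (1:Fin (1+3)) + 1 = 2 by decide] at a1
  rw [show (2:Fin (1+3)) + 1 = 3 by decide] at a2
  rw [show (3:Fin (1+3)) + 1 = 0 by decide] at a3
  have c0' := hB 0
  have c1' := hB 1
  rw [show (0:Fin (1+3)) + 2 = 2 by decide, show (0:Fin (1+3)) + 4 = 0 by decide] at c0'
  rw [show (1:Fin (1+3)) + 2 = 3 by decide, show (1:Fin (1+3)) + 4 = 1 by decide] at c1'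
  have c0 : col 0 ≠ col 2 := fun hx => c0' ⟨hx, hx.symm⟩
  have c1 : col 1 ≠ col 3 := fun hx => c1' ⟨hx, hx.symm⟩
  exact four (hb 0) (hb 1) (hb 2) (hb 3) a0 a1 a2 a3 c0 c1

private lemma lb7 {k : ℕ} (h : ∃ col, GoodCol 4 k col) : 4 ≤ k := by
  obtain ⟨col, hbd, hA, hB⟩ := h
  by_contra hk
  push_neg at hk
  have hb : ∀ a, col a < 3 := fun a => by have := hbd a; omega
  have a0 := hA 0
  have a1 := hA 1
  have a2 := hA 2
  have a3 := hA 3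
  have a4 := hA 4
  have a5 := hA 5
  have a6 := hA 6
  rw [show (0:Fin (4+3)) + 1 = 1 by decide] at a0
  rw [show (1:Fin (4+3)) + 1 = 2 by decide] at a1
  rw [show (2:Fin (4+3)) + 1 = 3 by decide] at a2
  rw [show (3:Fin (4+3)) + 1 = 4 by decide] at a3
  rw [show (4:Fin (4+3)) + 1 = 5 by decide] at a4
  rw [show (5:Fin (4+3)) + 1 = 6 by decide] at a5
  rw [show (6:Fin (4+3)) + 1 = 0 by decide] at a6
  have c0 := hB 0
  have c1 := hB 1
  have c2 := hB 2
  have c3 := hB 3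
  have c4 := hB 4
  have c5 := hB 5
  have c6 := hB 6
  rw [show (0:Fin (4+3)) + 2 = 2 by decide, show (0:Fin (4+3)) + 4 = 4 by decide] at c0
  rw [show (1:Fin (4+3)) + 2 = 3 by decide, show (1:Fin (4+3)) + 4 = 5 by decide] at c1
  rw [show (2:Fin (4+3)) + 2 = 4 by decide, show (2:Fin (4+3)) + 4 = 6 by decide] at c2
  rw [show (3:Fin (4+3)) + 2 = 5 by decide, show (3:Fin (4+3)) + 4 = 0 by decide] at c3
  rw [show (4:Fin (4+3)) + 2 = 6 by decide, show (4:Fin (4+3)) + 4 = 1 by decide] at c4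
  rw [show (5:Fin (4+3)) + 2 = 0 by decide, show (5:Fin (4+3)) + 4 = 2 by decide] at c5
  rw [show (6:Fin (4+3)) + 2 = 1 by decide, show (6:Fin (4+3)) + 4 = 3 by decide] at c6
  exact seven (hb 0) (hb 1) (hb 2) (hb 3) (hb 4) (hb 5) (hb 6)
    a0 a1 a2 a3 a4 a5 a6 c0 c1 c2 c3 c4 c5 c6

private def tOf (r : ℕ) : ℕ := if r = 0 then 0 else if r = 1 then 2 else 1

private def colF (r v : ℕ) : ℕ :=
  if v < 10 then
    (if r = 0 then [0,1,2,0,1,2,0,1,2,0]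
     else if r = 1 then [0,1,0,2,1,0,1,0,2,1]
     else [0,1,0,2,1,0,1,2,0,1]).getD v 0
  else (v + tOf r) % 3

private lemma colF_lt (r v : ℕ) : colF r v < 3 := by
  unfold colF
  split_ifs with h h1 h2 <;> first
    | exact Nat.mod_lt _ (by omega)
    | (interval_cases v <;> simp)

private lemma colF_tail (r v : ℕ) (h : 10 ≤ v) : colF r v = (v + tOf r) % 3 := by
  unfold colF
  rw [if_neg (by omega)]

private lemma natA (n v : ℕ) (hn : 14 ≤ n) (hv : v < n) :
    colF (n % 3) ((v + 1) % n) ≠ colF (n % 3) v := by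
  have hr : n % 3 = 0 ∨ n % 3 = 1 ∨ n % 3 = 2 := by omega
  by_cases h1 : v + 1 < n
  · have e1 : (v + 1) % n = v + 1 := Nat.mod_eq_of_lt h1
    rw [e1]
    by_cases h2 : v < 10
    · rcases hr with h | h | h <;> rw [h] <;> interval_cases v <;> decide
    · have t1 : colF (n % 3) v = (v + tOf (n % 3)) % 3 := colF_tail _ _ (by omega)
      have t2 : colF (n % 3) (v + 1) = (v + 1 + tOf (n % 3)) % 3 := colF_tail _ _ (by omega)
      rw [t1, t2]
      rcases hr with h | h | h <;> simp [h, tOf] <;> omega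
  · have hv' : v = n - 1 := by omega
    subst hv'
    have e1 : (n - 1 + 1) % n = 0 := by rw [show n - 1 + 1 = n by omega, Nat.mod_self]
    have t1 : colF (n % 3) (n - 1) = (n - 1 + tOf (n % 3)) % 3 := colF_tail _ _ (by omega)
    rw [e1, t1]
    have h0 : colF (n % 3) 0 = 0 := by
      rcases hr with h | h | h <;> rw [h] <;> decide
    rw [h0]
    rcases hr with h | h | h <;> simp [h, tOf] <;> omega

private lemma natB (n v : ℕ) (hn : 14 ≤ n) (hv : v < n) :
    ¬(colF (n % 3) v = colF (n % 3) ((v + 2) % n) ∧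
      colF (n % 3) ((v + 2) % n) = colF (n % 3) ((v + 4) % n)) := by
  have hr : n % 3 = 0 ∨ n % 3 = 1 ∨ n % 3 = 2 := by omega
  by_cases h2 : v < 10
  · have e2 : (v + 2) % n = v + 2 := Nat.mod_eq_of_lt (by omega)
    have e4 : (v + 4) % n = v + 4 := Nat.mod_eq_of_lt (by omega)
    rw [e2, e4]
    rcases hr with h | h | h <;> rw [h] <;> interval_cases v <;> decide
  · rintro ⟨hx, -⟩
    by_cases h4 : v + 4 < n
    · have e2 : (v + 2) % n = v + 2 := Nat.mod_eq_of_lt (by omega)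
      have t1 : colF (n % 3) v = (v + tOf (n % 3)) % 3 := colF_tail _ _ (by omega)
      have t2 : colF (n % 3) (v + 2) = (v + 2 + tOf (n % 3)) % 3 := colF_tail _ _ (by omega)
      rw [e2, t1, t2] at hx
      rcases hr with h | h | h <;> simp [h, tOf] at hx <;> omega
    · have hc : v = n - 4 ∨ v = n - 3 ∨ v = n - 2 ∨ v = n - 1 := by omega
      rcases hc with rfl | rfl | rfl | rfl
      · have e2 : (n - 4 + 2) % n = n - 2 := by
          rw [show n - 4 + 2 = n - 2 by omega]; exact Nat.mod_eq_of_lt (by omega)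
        have t1 : colF (n % 3) (n - 4) = (n - 4 + tOf (n % 3)) % 3 := colF_tail _ _ (by omega)
        have t2 : colF (n % 3) (n - 2) = (n - 2 + tOf (n % 3)) % 3 := colF_tail _ _ (by omega)
        rw [e2, t1, t2] at hx
        rcases hr with h | h | h <;> simp [h, tOf] at hx <;> omega
      · have e2 : (n - 3 + 2) % n = n - 1 := by
          rw [show n - 3 + 2 = n - 1 by omega]; exact Nat.mod_eq_of_lt (by omega)
        have t1 : colF (n % 3) (n - 3) = (n - 3 + tOf (n % 3)) % 3 := colF_tail _ _ (by omega)
        have t2 : colF (n % 3) (n - 1) = (n - 1 + tOf (n % 3)) % 3 := colF_tail _ _ (by omega)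
        rw [e2, t1, t2] at hx
        rcases hr with h | h | h <;> simp [h, tOf] at hx <;> omega
      · have e2 : (n - 2 + 2) % n = 0 := by rw [show n - 2 + 2 = n by omega, Nat.mod_self]
        have t1 : colF (n % 3) (n - 2) = (n - 2 + tOf (n % 3)) % 3 := colF_tail _ _ (by omega)
        have h0 : colF (n % 3) 0 = 0 := by rcases hr with h | h | h <;> rw [h] <;> decide
        rw [e2, t1, h0] at hx
        rcases hr with h | h | h <;> simp [h, tOf] at hx <;> omega
      · have e2 : (n - 1 + 2) % n = 1 := by
          rw [show n - 1 + 2 = n + 1 by omega, Nat.add_mod_left]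
          exact Nat.mod_eq_of_lt (by omega)
        have t1 : colF (n % 3) (n - 1) = (n - 1 + tOf (n % 3)) % 3 := colF_tail _ _ (by omega)
        have h0 : colF (n % 3) 1 = 1 := by rcases hr with h | h | h <;> rw [h] <;> decide
        rw [e2, t1, h0] at hx
        rcases hr with h | h | h <;> simp [h, tOf] at hx <;> omega

private lemma val1 (m : ℕ) (a : Fin (m+3)) : (a + 1).val = (a.val + 1) % (m+3) := by
  rw [Fin.val_add]; congr 1

private lemma val2 (m : ℕ) (a : Fin (m+3)) : (a + 2).val = (a.val + 2) % (m+3) := by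
  rw [Fin.val_add]; congr 1

private lemma val4 (m : ℕ) (hm : 11 ≤ m) (a : Fin (m+3)) :
    (a + 4).val = (a.val + 4) % (m+3) := by
  rw [Fin.val_add]
  congr 1
  have : ((4:Fin (m+3))).val = 4 % (m+3) := rfl
  rw [this, Nat.mod_eq_of_lt (by omega)]

private lemma ub_large (m : ℕ) (hm : 11 ≤ m) : ∃ col, GoodCol m 3 col := by
  refine ⟨fun a => colF ((m+3) % 3) a.val, fun a => colF_lt _ _, ?_, ?_⟩
  · intro a
    beta_reduce
    rw [val1 m a]
    exact (natA (m+3) a.val (by omega) a.isLt).symm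
  · intro a
    beta_reduce
    rw [val2 m a, val4 m hm a]
    exact natB (m+3) a.val (by omega) a.isLt

end CycleAux

/-- `χ'_ss(C_4) = χ'_ss(C_7) = 4` and `χ'_ss(C_n) = 3` for every other `n ≥ 3`. -/
theorem ssIndex_cycles :
    ssIndex (SimpleGraph.cycleGraph 4) = 4 ∧
    ssIndex (SimpleGraph.cycleGraph 7) = 4 ∧
    ∀ n : ℕ, 3 ≤ n → n ≠ 4 → n ≠ 7 → ssIndex (SimpleGraph.cycleGraph n) = 3 := by
  refine ⟨?_, ?_, ?_⟩
  · show ssIndex (cycleGraph (1+3)) = 4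
    rw [ssIndex_eq 1]
    have h4 : 4 ∈ {k | ∃ col, GoodCol 1 k col} :=
      ⟨fun a => a.val, by decide, by decide, by decide⟩
    exact le_antisymm (Nat.sInf_le h4) (le_csInf ⟨4, h4⟩ fun k hk => lb4 hk)
  · show ssIndex (cycleGraph (4+3)) = 4
    rw [ssIndex_eq 4]
    have h4 : 4 ∈ {k | ∃ col, GoodCol 4 k col} :=
      ⟨fun a => [0,1,0,2,1,2,3].getD a.val 0, by decide, by decide, by decide⟩
    exact le_antisymm (Nat.sInf_le h4) (le_csInf ⟨4, h4⟩ fun k hk => lb7 hk)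
  · intro n h3 h4 h7
    obtain ⟨m, rfl⟩ : ∃ m, n = m + 3 := ⟨n - 3, by omega⟩
    rw [ssIndex_eq m]
    have hub : 3 ∈ {k | ∃ col, GoodCol m k col} := by
      by_cases hm : 11 ≤ m
      · exact ub_large m hm
      · push_neg at hm
        interval_cases m
        · exact ⟨fun a => [0,1,2].getD a.val 0, by decide, by decide, by decide⟩
        · exact absurd rfl h4
        · exact ⟨fun a => [0,1,0,2,1].getD a.val 0, by decide, by decide, by decide⟩
        · exact ⟨fun a => [0,1,2,0,1,2].getD a.val 0, by decide, by decide, by decide⟩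
        · exact absurd rfl h7
        · exact ⟨fun a => [0,1,0,2,1,0,1,2].getD a.val 0, by decide, by decide, by decide⟩
        · exact ⟨fun a => [0,1,2,0,1,2,0,1,2].getD a.val 0, by decide, by decide, by decide⟩
        · exact ⟨fun a => [0,1,0,2,1,0,1,0,2,1].getD a.val 0, by decide, by decide, by decide⟩
        · exact ⟨fun a => [0,1,0,2,1,0,1,2,0,1,2].getD a.val 0, by decide, by decide, by decide⟩
        · exact ⟨fun a => [0,1,2,0,1,2,0,1,2,0,1,2].getD a.val 0, by decide, by decide, by decide⟩
        · exact ⟨fun a => [0,1,0,2,1,0,1,0,2,1,0,1,2].getD a.val 0, by decide, by decide, by decide⟩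
    exact le_antisymm (Nat.sInf_le hub) (le_csInf ⟨3, hub⟩ fun k hk => lower3 hk)

end SSE
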